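/- Let A be a Banach algebra containing no isomorphic copy of ℓ¹. If f ∈ A* is such that T_f maps weakly precompact sets onto L-sets, then T_f is a compact operator. -/

import Mathlib

open Filter Topology ENNReal

/-- A sequence is weakly null if `f (x n) → 0` for every continuous linear functional `f`. -/
def WeaklyNull {A : Type*} [NormedAddCommGroup A] [NormedSpace ℝ A] (x : ℕ → A) : Prop :=
  ∀ f : A →L[ℝ] ℝ, Tendsto (fun n => f (x n)) atTop (𝓝 0)

/-- A sequence is weakly Cauchy if `f (x n)` converges for every continuous linear functional. -/
def WeaklyCauchy {A : Type*} [NormedAddCommGroup A] [NormedSpace ℝ A] (x : ℕ → A) : Prop :=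
  ∀ f : A →L[ℝ] ℝ, ∃ L : ℝ, Tendsto (fun n => f (x n)) atTop (𝓝 L)

/-- `E ⊆ A*` is an L-set: `sup_{f ∈ E} |f (x n)| → 0` for every weakly null `x`. -/
def LSet {A : Type*} [NormedAddCommGroup A] [NormedSpace ℝ A] (E : Set (A →L[ℝ] ℝ)) : Prop :=
  ∀ x : ℕ → A, WeaklyNull x → ∀ ε > (0 : ℝ), ∃ N : ℕ, ∀ n ≥ N, ∀ f ∈ E, |f (x n)| < ε

/-- A set is weakly precompact if every sequence in it has a weakly Cauchy subsequence. -/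
def WeaklyPrecompact {A : Type*} [NormedAddCommGroup A] [NormedSpace ℝ A] (K : Set A) : Prop :=
  ∀ x : ℕ → A, (∀ n, x n ∈ K) → ∃ φ : ℕ → ℕ, StrictMono φ ∧ WeaklyCauchy (x ∘ φ)

/-- A map is completely continuous if it sends weakly null sequences to norm null sequences. -/
def CompletelyContinuous {A B : Type*} [NormedAddCommGroup A] [NormedSpace ℝ A]
    [NormedAddCommGroup B] (T : A → B) : Prop :=
  ∀ x : ℕ → A, WeaklyNull x → Tendsto (fun n => ‖T (x n)‖) atTop (𝓝 0)

/-- The multiplication operator `T_f : A → A*`, `(T_f a) x = f (a * x)`. -/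
noncomputable def Tf {A : Type*} [NormedRing A] [NormedAlgebra ℝ A]
    (f : A →L[ℝ] ℝ) (a : A) : A →L[ℝ] ℝ :=
  f.comp (ContinuousLinearMap.mul ℝ A a)

/-- The multiplication operator `S_f : A → A*`, `(S_f a) x = f (x * a)`. -/
noncomputable def Sf {A : Type*} [NormedRing A] [NormedAlgebra ℝ A]
    (f : A →L[ℝ] ℝ) (a : A) : A →L[ℝ] ℝ :=
  f.comp ((ContinuousLinearMap.mul ℝ A).flip a)

/-- `w` is an ℓ¹-sequence: equivalent to the unit vector basis of ℓ¹. -/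
def IsL1Sequence {A : Type*} [NormedAddCommGroup A] [NormedSpace ℝ A] (w : ℕ → A) : Prop :=
  ∃ c C : ℝ, 0 < c ∧ ∀ (s : Finset ℕ) (lam : ℕ → ℝ),
    c * ∑ n ∈ s, |lam n| ≤ ‖∑ n ∈ s, lam n • w n‖ ∧
      ‖∑ n ∈ s, lam n • w n‖ ≤ C * ∑ n ∈ s, |lam n|

/-- The Schur property: weakly convergent sequences are norm convergent. -/
def SchurProperty (A : Type*) [NormedAddCommGroup A] [NormedSpace ℝ A] : Prop :=
  ∀ (x : ℕ → A) (L : A),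
    (∀ f : A →L[ℝ] ℝ, Tendsto (fun n => f (x n)) atTop (𝓝 (f L))) →
      Tendsto x atTop (𝓝 L)



open Set

namespace NWx

/-- Dependent-choice style chain construction. -/
lemma chain_exists {α : Type*} (P : α → Prop) (R : α → α → Prop)
    (a0 : α) (h0 : P a0) (step : ∀ a, P a → ∃ b, P b ∧ R a b) :
    ∃ f : ℕ → α, f 0 = a0 ∧ (∀ n, P (f n)) ∧ ∀ n, R (f n) (f (n + 1)) := by
  choose g hP hR using step
  let F : ℕ → {a // P a} := fun n =>
    Nat.rec (⟨a0, h0⟩ : {a // P a}) (fun _ p => ⟨g p.1 p.2, hP p.1 p.2⟩) n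
  exact ⟨fun n => (F n).1, rfl, fun n => (F n).2, fun n => hR (F n).1 (F n).2⟩

variable (Bad : Finset ℕ → Prop)

/-- `F` is an initial segment of `M`. -/
def IsInit (F : Finset ℕ) (M : Set ℕ) : Prop :=
  ↑F ⊆ M ∧ ∀ m ∈ M, m ∉ F → ∀ a ∈ F, a < m

def InO (M : Set ℕ) : Prop := ∃ F : Finset ℕ, IsInit F M ∧ Bad F

def Acpt (F : Finset ℕ) (X : Set ℕ) : Prop :=
  ∀ Y ⊆ X, Y.Infinite → InO Bad (↑F ∪ Y)

def Rejc (F : Finset ℕ) (X : Set ℕ) : Prop :=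
  ∀ Y ⊆ X, Y.Infinite → ¬ Acpt Bad F Y

variable {Bad}

lemma Acpt.mono {F X Y} (h : Acpt Bad F X) (hYX : Y ⊆ X) : Acpt Bad F Y :=
  fun Z hZ => h Z (hZ.trans hYX)

lemma Rejc.mono {F X Y} (h : Rejc Bad F X) (hYX : Y ⊆ X) : Rejc Bad F Y :=
  fun Z hZ => h Z (hZ.trans hYX)

lemma acpt_of_bad {F : Finset ℕ} {Y : Set ℕ} (hB : Bad F)
    (hab : ∀ a ∈ F, ∀ y ∈ Y, a < y) : Acpt Bad F Y := by
  intro Z hZY _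
  refine ⟨F, ⟨subset_union_left, ?_⟩, hB⟩
  intro m hm hmF a ha
  rcases hm with hm | hm
  · exact absurd (by exact_mod_cast hm) hmF
  · exact hab a ha m (hZY hm)

lemma inter_Ioi_infinite {X : Set ℕ} (hX : X.Infinite) (n : ℕ) :
    (X ∩ Set.Ioi n).Infinite := by
  have : X \ Set.Iic n ⊆ X ∩ Set.Ioi n := by
    intro x hx; exact ⟨hx.1, Set.mem_Ioi.mpr (not_le.mp hx.2)⟩
  exact (hX.diff (Set.finite_Iic n)).mono this

lemma step_rej {F : Finset ℕ} {X : Set ℕ} (hX : X.Infinite) (hrej : Rejc Bad F X) :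
    ∃ X', X' ⊆ X ∧ X'.Infinite ∧ ∀ x ∈ X', Rejc Bad (insert x F) (X' ∩ Set.Ioi x) := by
  by_contra hcon
  push_neg at hcon
  -- from the failure, at every infinite X' ⊆ X there is x ∈ X' and an infinite
  -- Y ⊆ X' ∩ Ioi x accepting insert x F
  have key : ∀ X', X' ⊆ X → X'.Infinite →
      ∃ x ∈ X', ∃ Y, Y ⊆ X' ∩ Set.Ioi x ∧ Y.Infinite ∧ Acpt Bad (insert x F) Y := by
    intro X' hsub hinf
    obtain ⟨x, hx, hnr⟩ := hcon X' hsub hinf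
    rw [Rejc] at hnr
    push_neg at hnr
    obtain ⟨Y, hY1, hY2, hY3⟩ := hnr
    exact ⟨x, hx, Y, hY1, hY2, hY3⟩
  -- build the chain
  obtain ⟨x0, hx0, Y0, hY0sub, hY0inf, hY0acc⟩ := key X subset_rfl hX
  obtain ⟨f, hf0, hfP, hfR⟩ := chain_exists
    (fun p : ℕ × Set ℕ => p.1 ∈ X ∧ p.2 ⊆ X ∧ p.2 ⊆ Set.Ioi p.1 ∧ p.2.Infinite ∧
      Acpt Bad (insert p.1 F) p.2)
    (fun p q => q.1 ∈ p.2 ∧ q.2 ⊆ p.2)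
    (x0, Y0)
    ⟨hx0, fun y hy => (hY0sub hy).1, fun y hy => (hY0sub hy).2, hY0inf, hY0acc⟩
    (by
      rintro ⟨x, Y⟩ ⟨hx, hYX, hYIoi, hYinf, hYacc⟩
      obtain ⟨x', hx', Y', hY'sub, hY'inf, hY'acc⟩ := key Y hYX hYinf
      exact ⟨(x', Y'), ⟨hYX hx', fun y hy => hYX (hY'sub hy).1,
        fun y hy => (hY'sub hy).2, hY'inf, hY'acc⟩, hx', fun y hy => (hY'sub hy).1⟩)
  set xs : ℕ → ℕ := fun n => (f n).1 with hxs
  set Ys : ℕ → Set ℕ := fun n => (f n).2 with hYs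
  have hmono : StrictMono xs := by
    apply strictMono_nat_of_lt_succ
    intro n
    exact (hfP n).2.2.1 (hfR n).1
  have hYchain : ∀ m n, m ≤ n → Ys n ⊆ Ys m := by
    intro m n hmn
    induction n, hmn using Nat.le_induction with
    | base => exact subset_rfl
    | succ n hmn ih => exact ((hfR n).2).trans ih
  have hxY : ∀ k m, k < m → xs m ∈ Ys k := by
    intro k m hkm
    obtain ⟨j, rfl⟩ := Nat.exists_eq_add_of_lt hkm
    induction j with
    | zero => exact (hfR k).1
    | succ j ih =>
        have h1 : xs (k + j + 1 + 1) ∈ Ys (k + j + 1) := (hfR (k + j + 1)).1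
        have h2 : Ys (k + j + 1) ⊆ Ys k := hYchain k (k + j + 1) (by omega)
        exact (by rw [show k + (j+1) + 1 = k + j + 1 + 1 by omega]; exact h2 h1)
  -- Z := range xs accepts F, contradiction with rejection
  have hZX : Set.range xs ⊆ X := by
    rintro _ ⟨n, rfl⟩
    exact (hfP n).1
  have hZinf : (Set.range xs).Infinite := Set.infinite_range_of_injective hmono.injective
  apply hrej (Set.range xs) hZX hZinf
  intro W hWZ hWinf
  -- least element of W
  have hWne : W.Nonempty := hWinf.nonempty
  set w0 := sInf W with hw0def
  have hw0 : w0 ∈ W := Nat.sInf_mem hWne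
  obtain ⟨k, hk⟩ := hWZ hw0
  have hWsub : W \ {w0} ⊆ Ys k := by
    intro w hw
    obtain ⟨m, hm⟩ := hWZ hw.1
    have hlt : w0 < w := lt_of_le_of_ne (Nat.sInf_le hw.1) (fun h => hw.2 h.symm)
    have hkm : k < m := by
      by_contra hh
      push_neg at hh
      have := hmono.le_iff_le.mpr hh
      rw [hk, hm] at this
      omega
    rw [← hm]
    exact hxY k m hkm
  have hacc := (hfP k).2.2.2.2
  have := hacc (W \ {w0}) hWsub (hWinf.diff (Set.finite_singleton w0))
  have hseteq : (↑(insert (xs k) F) : Set ℕ) ∪ (W \ {w0}) = ↑F ∪ W := by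
    rw [hk]
    ext z
    simp only [Finset.coe_insert, Set.mem_union, Set.mem_insert_iff, Set.mem_diff,
      Set.mem_singleton_iff, Finset.mem_coe]
    constructor
    · rintro (⟨rfl | hz⟩ | ⟨hz, _⟩)
      · exact Or.inr hw0
      · exact Or.inl (by assumption)
      · exact Or.inr hz
    · rintro (hz | hz)
      · exact Or.inl (Or.inr hz)
      · by_cases hzw : z = w0
        · exact Or.inl (Or.inl hzw)
        · exact Or.inr ⟨hz, hzw⟩
  rwa [hseteq] at this

lemma step_rej_finset (S : Finset (Finset ℕ)) {X : Set ℕ} (hX : X.Infinite)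
    (h : ∀ F ∈ S, Rejc Bad F X) :
    ∃ X', X' ⊆ X ∧ X'.Infinite ∧
      ∀ F ∈ S, ∀ x ∈ X', Rejc Bad (insert x F) (X' ∩ Set.Ioi x) := by
  induction S using Finset.induction generalizing X with
  | empty => exact ⟨X, subset_rfl, hX, by simp⟩
  | @insert F0 S hF0 ih =>
      obtain ⟨X1, hX1sub, hX1inf, hX1⟩ := ih hX (fun F hF => h F (Finset.mem_insert_of_mem hF))
      obtain ⟨X2, hX2sub, hX2inf, hX2⟩ :=
        step_rej hX1inf ((h F0 (Finset.mem_insert_self _ _)).mono hX1sub)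
      refine ⟨X2, hX2sub.trans hX1sub, hX2inf, ?_⟩
      intro F hF x hx
      rcases Finset.mem_insert.mp hF with rfl | hF
      · exact hX2 x hx
      · exact (hX1 F hF x (hX2sub hx)).mono
          (Set.inter_subset_inter_left _ hX2sub)

theorem nashWilliams (Bad : Finset ℕ → Prop) (X : Set ℕ) (hX : X.Infinite) :
    ∃ M, M ⊆ X ∧ M.Infinite ∧
      ((∀ N, N ⊆ M → N.Infinite → InO Bad N) ∨
        (∀ N, N ⊆ M → N.Infinite → ¬ InO Bad N)) := by
  by_cases hr : Rejc Bad ∅ X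
  · -- build an infinite set all of whose finite subsets are rejected
    obtain ⟨f, hf0, hfP, hfR⟩ := chain_exists
      (fun p : Finset ℕ × Set ℕ => ↑p.1 ⊆ X ∧ p.2 ⊆ X ∧ p.2.Infinite ∧
        (∀ a ∈ p.1, ∀ r ∈ p.2, a < r) ∧ (∀ F, F ⊆ p.1 → Rejc Bad F p.2))
      (fun p q => ∃ y, y ∈ p.2 ∧ q.1 = insert y p.1 ∧ q.2 ⊆ p.2 ∧ (∀ r ∈ q.2, y < r))
      (∅, X)
      ⟨by simp, subset_rfl, hX, by simp, fun F hF => by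
        rw [Finset.subset_empty.mp hF]; exact hr⟩
      (by
        rintro ⟨G, R⟩ ⟨hGX, hRX, hRinf, hab, hrej⟩
        obtain ⟨R', hR'sub, hR'inf, hR'⟩ := step_rej_finset G.powerset hRinf
          (fun F hF => hrej F (Finset.mem_powerset.mp hF))
        obtain ⟨y, hy⟩ := hR'inf.nonempty
        refine ⟨(insert y G, R' ∩ Set.Ioi y), ⟨?_, ?_, ?_, ?_, ?_⟩, y, hR'sub hy, rfl,
          (Set.inter_subset_left).trans hR'sub, fun r hr => hr.2⟩
        · intro a ha
          rcases Finset.mem_insert.mp (by exact_mod_cast ha) with rfl | ha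
          · exact hRX (hR'sub hy)
          · exact hGX ha
        · exact ((Set.inter_subset_left).trans hR'sub).trans hRX
        · exact inter_Ioi_infinite hR'inf y
        · intro a ha r hrr
          rcases Finset.mem_insert.mp ha with rfl | ha
          · exact hrr.2
          · exact hab a ha r (hR'sub hrr.1)
        · intro F hF
          by_cases hyF : y ∈ F
          · have h1 : F.erase y ⊆ G := by
              intro a ha
              have := hF (Finset.mem_of_mem_erase ha)
              rcases Finset.mem_insert.mp this with rfl | h
              · exact absurd rfl (Finset.ne_of_mem_erase ha)
              · exact h
            have := hR' (F.erase y) (Finset.mem_powerset.mpr h1) y hy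
            rwa [Finset.insert_erase hyF] at this
          · have hFG : F ⊆ G := fun a ha => by
              rcases Finset.mem_insert.mp (hF ha) with rfl | h
              · exact absurd ha hyF
              · exact h
            exact (hrej F hFG).mono ((Set.inter_subset_left).trans hR'sub))
    -- the sequence of chosen points
    choose ys hys1 hys2 hys3 hys4 using hfR
    set Gs : ℕ → Finset ℕ := fun n => (f n).1 with hGs
    set Rs : ℕ → Set ℕ := fun n => (f n).2 with hRs
    have hmono : StrictMono ys := by
      apply strictMono_nat_of_lt_succ
      intro n
      exact hys4 n (ys (n + 1)) (hys1 (n + 1))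
    have hGsSucc : ∀ n, Gs (n + 1) = insert (ys n) (Gs n) := fun n => hys2 n
    have hysGs : ∀ n i, i < n → ys i ∈ Gs n := by
      intro n
      induction n with
      | zero => omega
      | succ n ih =>
          intro i hi
          rw [hGsSucc n]
          rcases Nat.lt_succ_iff_lt_or_eq.mp hi with h | rfl
          · exact Finset.mem_insert_of_mem (ih i h)
          · exact Finset.mem_insert_self _ _
    refine ⟨Set.range ys, ?_, Set.infinite_range_of_injective hmono.injective, Or.inr ?_⟩
    · rintro _ ⟨n, rfl⟩
      exact (hfP n).2.1 (hys1 n)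
    · rintro N hNsub hNinf ⟨F, hinit, hbad⟩
      have hFr : ∀ a ∈ F, ∃ i, ys i = a := fun a ha => hNsub (hinit.1 ha)
      choose idx hidx using hFr
      set k := F.attach.sup (fun a => idx a.1 a.2) + 1 with hk
      have hFG : ↑F ⊆ ↑(Gs k) := by
        intro a ha
        have ha' : a ∈ F := ha
        have hle : idx a ha' < k := by
          have h2 : idx a ha' ≤ F.attach.sup (fun a => idx a.1 a.2) :=
            Finset.le_sup (f := fun a : {x // x ∈ F} => idx a.1 a.2)
              (Finset.mem_attach F ⟨a, ha'⟩)
          omega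
        rw [← hidx a ha']
        exact_mod_cast hysGs k _ hle
      have hrejF : Rejc Bad F (Rs k) := (hfP k).2.2.2.2 F (by exact_mod_cast hFG)
      have habove : ∀ a ∈ F, ∀ r ∈ Rs k, a < r := fun a ha =>
        (hfP k).2.2.2.1 a (by exact_mod_cast hFG ha)
      exact hrejF (Rs k) subset_rfl (hfP k).2.2.1 (acpt_of_bad hbad habove)
  · rw [Rejc] at hr
    push_neg at hr
    obtain ⟨Y, hYX, hYinf, hYacc⟩ := hr
    refine ⟨Y, hYX, hYinf, Or.inl ?_⟩
    intro N hN hNinf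
    have := hYacc N hN hNinf
    simpa using this

end NWx

namespace Rosx

/-- cumulative count of padded-block elements among indices `< i`. -/
def cnt (t : Finset ℕ) (b : ℕ → Bool) : ℕ → ℕ
  | 0 => 0
  | i + 1 => cnt t b i +
      (if i ∈ t then 1 + (if (Even (cnt t b i)) ↔ (b i = true) then 1 else 0) else 0)

def pad (t : Finset ℕ) (b : ℕ → Bool) (i : ℕ) : ℕ :=
  if (Even (cnt t b i)) ↔ (b i = true) then 1 else 0

lemma pad_le_one (t : Finset ℕ) (b : ℕ → Bool) (i : ℕ) : pad t b i ≤ 1 := by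
  unfold pad; split <;> omega

lemma cnt_succ (t : Finset ℕ) (b : ℕ → Bool) (i : ℕ) :
    cnt t b (i + 1) = cnt t b i + (if i ∈ t then 1 + pad t b i else 0) := rfl

lemma parity_pad (t : Finset ℕ) (b : ℕ → Bool) (i : ℕ) :
    Even (cnt t b i + pad t b i) ↔ (b i = false) := by
  unfold pad
  rcases hb : b i with _ | _ <;> split <;>
    simp_all [Nat.even_add_one, Nat.even_add] <;> tauto

lemma cnt_eq_sum (t : Finset ℕ) (b : ℕ → Bool) (i : ℕ) :
    cnt t b i = ∑ j ∈ t.filter (· < i), (1 + pad t b j) := by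
  induction i with
  | zero => simp [cnt]
  | succ i ih =>
      have hfil : t.filter (· < i + 1) =
          (t.filter (· < i)) ∪ t.filter (· = i) := by
        ext j
        simp only [Finset.mem_union, Finset.mem_filter]
        by_cases hj : j ∈ t <;> simp [hj] <;> omega
      have hdisj : Disjoint (t.filter (· < i)) (t.filter (· = i)) := by
        rw [Finset.disjoint_filter]
        intro j _ h h2
        omega
      rw [cnt_succ, hfil, Finset.sum_union hdisj, ← ih]
      congr 1
      by_cases hi : i ∈ t
      · have : t.filter (· = i) = {i} := by
          ext j
          simp only [Finset.mem_filter, Finset.mem_singleton]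
          constructor
          · rintro ⟨_, rfl⟩; rfl
          · rintro rfl; exact ⟨hi, rfl⟩
        simp [this, hi]
      · have : t.filter (· = i) = ∅ := by
          ext j
          simp only [Finset.mem_filter, Finset.notMem_empty, iff_false, not_and]
          rintro hj rfl; exact hi hj
        simp [this, hi]

/-- cardinality of a 0/1-valued filter equals the sum. -/
lemma card_filter_pad (s : Finset ℕ) (t : Finset ℕ) (b : ℕ → Bool) :
    (s.filter (fun j => pad t b j = 1)).card = ∑ j ∈ s, pad t b j := by
  rw [Finset.card_filter]
  apply Finset.sum_congr rfl
  intro j _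
  have := pad_le_one t b j
  split <;> omega

/-- The padded finset. -/
def padded (u : ℕ → ℕ) (t : Finset ℕ) (b : ℕ → Bool) : Finset ℕ :=
  (t.image fun j => u (2*j+2)) ∪
    ((t.filter fun j => pad t b j = 1).image fun j => u (2*j+1))

lemma count_below (u : ℕ → ℕ) (hu : StrictMono u) (t : Finset ℕ) (b : ℕ → Bool)
    {i : ℕ} (hi : i ∈ t) :
    ((padded u t b).filter (· < u (2*i+2))).card = cnt t b i + pad t b i := by
  classical
  unfold padded
  rw [Finset.filter_union]
  have h1 : (t.image fun j => u (2*j+2)).filter (· < u (2*i+2)) =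
      (t.filter (· < i)).image (fun j => u (2*j+2)) := by
    rw [Finset.filter_image]
    congr 1
    apply Finset.filter_congr
    intro j _
    simp only [hu.lt_iff_lt]
    constructor <;> (intro h; omega)
  have h2 : (((t.filter fun j => pad t b j = 1)).image fun j => u (2*j+1)).filter
      (· < u (2*i+2)) =
      ((t.filter fun j => pad t b j = 1).filter (· ≤ i)).image (fun j => u (2*j+1)) := by
    rw [Finset.filter_image]
    congr 1
    apply Finset.filter_congr
    intro j _
    simp only [hu.lt_iff_lt]
    constructor <;> (intro h; omega)
  rw [h1, h2]
  have hinj1 : Set.InjOn (fun j => u (2*j+2)) ↑(t.filter (· < i)) := by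
    intro a _ c _ h
    have := hu.injective h
    omega
  have hinj2 : Set.InjOn (fun j => u (2*j+1))
      ↑((t.filter fun j => pad t b j = 1).filter (· ≤ i)) := by
    intro a _ c _ h
    have := hu.injective h
    omega
  have hdisj : Disjoint ((t.filter (· < i)).image (fun j => u (2*j+2)))
      (((t.filter fun j => pad t b j = 1).filter (· ≤ i)).image (fun j => u (2*j+1))) := by
    rw [Finset.disjoint_left]
    rintro a ha hb2
    obtain ⟨j, _, rfl⟩ := Finset.mem_image.mp ha
    obtain ⟨k, _, hk⟩ := Finset.mem_image.mp hb2
    have := hu.injective hk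
    omega
  rw [Finset.card_union_of_disjoint hdisj, Finset.card_image_of_injOn hinj1,
    Finset.card_image_of_injOn hinj2]
  have h3 : (t.filter fun j => pad t b j = 1).filter (· ≤ i) =
      (t.filter (· ≤ i)).filter (fun j => pad t b j = 1) := by
    ext j; simp only [Finset.mem_filter]; tauto
  rw [h3, card_filter_pad, cnt_eq_sum]
  have h4 : t.filter (· ≤ i) = insert i (t.filter (· < i)) := by
    ext j
    simp only [Finset.mem_filter, Finset.mem_insert]
    constructor
    · rintro ⟨hj, hji⟩
      rcases Nat.lt_or_ge j i with h | h
      · exact Or.inr ⟨hj, h⟩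
      · exact Or.inl (by omega)
    · rintro (rfl | ⟨hj, hji⟩)
      · exact ⟨hi, le_refl _⟩
      · exact ⟨hj, by omega⟩
  rw [h4, Finset.sum_insert (by simp)]
  rw [Finset.sum_add_distrib]
  simp [mul_comm]
  omega

lemma mem_padded (u : ℕ → ℕ) (t : Finset ℕ) (b : ℕ → Bool) {i : ℕ} (hi : i ∈ t) :
    u (2*i+2) ∈ padded u t b :=
  Finset.mem_union_left _ (Finset.mem_image_of_mem _ hi)

lemma padded_subset_range (u : ℕ → ℕ) (t : Finset ℕ) (b : ℕ → Bool) :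
    ↑(padded u t b) ⊆ Set.range u := by
  intro a ha
  rcases Finset.mem_union.mp ha with h | h
  · obtain ⟨j, _, rfl⟩ := Finset.mem_image.mp h; exact ⟨2*j+2, rfl⟩
  · obtain ⟨j, _, rfl⟩ := Finset.mem_image.mp h; exact ⟨2*j+1, rfl⟩

end Rosx
namespace Rosx
open NWx Set Filter Topology

variable {A : Type*} [NormedAddCommGroup A] [NormedSpace ℝ A]

/-- The alternating-goodness predicate for the Nash–Williams argument. -/
def AltGood (x : ℕ → A) (r s : ℝ) (F : Finset ℕ) : Prop :=
  ∃ g : A →L[ℝ] ℝ, ‖g‖ ≤ 1 ∧ ∀ a ∈ F,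
    (if Even ((F.filter (· < a)).card) then g (x a) < r else s < g (x a))

/-- From hereditary alternating goodness, build an ℓ¹ sequence. -/
lemma isL1_of_altGood (x : ℕ → A) (c₀ : ℝ) (hb : ∀ n, ‖x n‖ ≤ c₀)
    (r s : ℝ) (hrs : r < s) (u : ℕ → ℕ) (hu : StrictMono u)
    (hgood : ∀ F : Finset ℕ, ↑F ⊆ Set.range u → AltGood x r s F) :
    IsL1Sequence (fun i => x (u (2*i+2))) := by
  refine ⟨(s - r)/2, c₀, by linarith, ?_⟩
  intro t lam
  constructor
  · -- lower estimate
    set b1 : ℕ → Bool := fun i => decide (0 ≤ lam i) with hb1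
    set b2 : ℕ → Bool := fun i => ! decide (0 ≤ lam i) with hb2
    obtain ⟨g1, hg1n, hg1⟩ := hgood (padded u t b1) (padded_subset_range u t b1)
    obtain ⟨g2, hg2n, hg2⟩ := hgood (padded u t b2) (padded_subset_range u t b2)
    -- key pointwise estimates
    have key : ∀ i ∈ t, (s - r) * |lam i| ≤ lam i * ((g1 - g2) (x (u (2*i+2)))) := by
      intro i hi
      have c1 := hg1 (u (2*i+2)) (mem_padded u t b1 hi)
      have c2 := hg2 (u (2*i+2)) (mem_padded u t b2 hi)
      rw [count_below u hu t b1 hi] at c1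
      rw [count_below u hu t b2 hi] at c2
      rcases le_or_gt 0 (lam i) with hl | hl
      · have e1 : ¬ Even (cnt t b1 i + pad t b1 i) := by
          rw [parity_pad]; simp [hb1, hl]
        have e2 : Even (cnt t b2 i + pad t b2 i) := by
          rw [parity_pad]; simp [hb2, hl]
        rw [if_neg e1] at c1
        rw [if_pos e2] at c2
        have : s - r ≤ (g1 - g2) (x (u (2*i+2))) := by
          simp only [ContinuousLinearMap.sub_apply]
          linarith
        rw [abs_of_nonneg hl]
        calc (s - r) * lam i ≤ ((g1 - g2) (x (u (2*i+2)))) * lam i := by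
              apply mul_le_mul_of_nonneg_right this hl
          _ = lam i * ((g1 - g2) (x (u (2*i+2)))) := mul_comm _ _
      · have e1 : Even (cnt t b1 i + pad t b1 i) := by
          rw [parity_pad]; simp [hb1, not_le.mpr hl]
        have e2 : ¬ Even (cnt t b2 i + pad t b2 i) := by
          rw [parity_pad]; simp [hb2, not_le.mpr hl]
        rw [if_pos e1] at c1
        rw [if_neg e2] at c2
        have hd : (g1 - g2) (x (u (2*i+2))) ≤ -(s - r) := by
          simp only [ContinuousLinearMap.sub_apply]
          linarith
        rw [abs_of_neg hl]
        have := mul_le_mul_of_nonpos_left hd (le_of_lt hl)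
        calc (s - r) * -lam i = -lam i * (s - r) := mul_comm _ _
          _ ≤ lam i * ((g1 - g2) (x (u (2*i+2)))) := by nlinarith
    have hsum : (s - r) * ∑ i ∈ t, |lam i| ≤
        (g1 - g2) (∑ i ∈ t, lam i • x (u (2*i+2))) := by
      rw [map_sum]
      rw [Finset.mul_sum]
      apply Finset.sum_le_sum
      intro i hi
      have := key i hi
      rw [map_smul]
      simpa using this
    have hnorm : (g1 - g2) (∑ i ∈ t, lam i • x (u (2*i+2))) ≤
        2 * ‖∑ i ∈ t, lam i • x (u (2*i+2))‖ := by
      calc (g1 - g2) (∑ i ∈ t, lam i • x (u (2*i+2)))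
          ≤ ‖(g1 - g2) (∑ i ∈ t, lam i • x (u (2*i+2)))‖ := le_abs_self _
        _ ≤ ‖g1 - g2‖ * ‖∑ i ∈ t, lam i • x (u (2*i+2))‖ :=
            (g1 - g2).le_opNorm _
        _ ≤ 2 * ‖∑ i ∈ t, lam i • x (u (2*i+2))‖ := by
            apply mul_le_mul_of_nonneg_right _ (norm_nonneg _)
            calc ‖g1 - g2‖ ≤ ‖g1‖ + ‖g2‖ := norm_sub_le _ _
              _ ≤ 2 := by linarith
    nlinarith [Finset.sum_nonneg (fun i (_ : i ∈ t) => abs_nonneg (lam i))]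
  · -- upper estimate
    calc ‖∑ i ∈ t, lam i • x (u (2*i+2))‖ ≤ ∑ i ∈ t, ‖lam i • x (u (2*i+2))‖ :=
          norm_sum_le _ _
      _ ≤ ∑ i ∈ t, c₀ * |lam i| := by
          apply Finset.sum_le_sum
          intro i _
          rw [norm_smul, Real.norm_eq_abs, mul_comm]
          exact mul_le_mul_of_nonneg_right (hb _) (abs_nonneg _)
      _ = c₀ * ∑ i ∈ t, |lam i| := by rw [Finset.mul_sum]

end Rosx
namespace Rosx
open NWx Set Filter Topology

variable {A : Type*} [NormedAddCommGroup A] [NormedSpace ℝ A]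

lemma exists_strictMono_into (M : Set ℕ) (hM : M.Infinite) :
    ∃ u : ℕ → ℕ, StrictMono u ∧ ∀ n, u n ∈ M := by
  obtain ⟨m0, hm0⟩ := hM.nonempty
  obtain ⟨f, hf0, hfP, hfR⟩ := chain_exists (fun v : ℕ => v ∈ M) (fun v w => v < w) m0 hm0
    (fun v hv => by
      obtain ⟨w, hw⟩ := (inter_Ioi_infinite hM v).nonempty
      exact ⟨w, hw.1, hw.2⟩)
  exact ⟨f, strictMono_nat_of_lt_succ hfR, hfP⟩

lemma no_osc (x : ℕ → A) (r s : ℝ) (M : Set ℕ)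
    (hleft : ∀ N, N ⊆ M → N.Infinite → InO (fun F => ¬ AltGood x r s F) N)
    (g : A →L[ℝ] ℝ) (hgn : ‖g‖ ≤ 1) :
    ¬ ({n | n ∈ M ∧ g (x n) < r}.Infinite ∧ {n | n ∈ M ∧ s < g (x n)}.Infinite) := by
  rintro ⟨hP, hQ⟩
  set Pset := {n | n ∈ M ∧ g (x n) < r} with hPset
  set Qset := {n | n ∈ M ∧ s < g (x n)} with hQset
  -- build an alternating sequence
  obtain ⟨m0, hm0⟩ := hP.nonempty
  obtain ⟨f, hf0, hfP, hfR⟩ := chain_exists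
    (fun p : ℕ × ℕ => p.2 ∈ (if Even p.1 then Pset else Qset))
    (fun p q => q.1 = p.1 + 1 ∧ p.2 < q.2)
    (0, m0) (by simpa using hm0)
    (by
      rintro ⟨i, val⟩ hval
      have hT : (if Even (i+1) then Pset else Qset).Infinite := by
        by_cases h : Even (i+1) <;> simp [h, hP, hQ]
      obtain ⟨w, hw⟩ := (inter_Ioi_infinite hT val).nonempty
      exact ⟨(i+1, w), by simpa using hw.1, rfl, hw.2⟩)
  have hidx : ∀ n, (f n).1 = n := by
    intro n
    induction n with
    | zero => rw [hf0]
    | succ n ih => rw [(hfR n).1, ih]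
  set v : ℕ → ℕ := fun n => (f n).2 with hv
  have hvmono : StrictMono v := strictMono_nat_of_lt_succ (fun n => (hfR n).2)
  have hvmem : ∀ n, v n ∈ (if Even n then Pset else Qset) := by
    intro n
    have := hfP n
    rwa [hidx n] at this
  have hvM : ∀ n, v n ∈ M := by
    intro n
    have := hvmem n
    by_cases h : Even n <;> simp [h] at this <;> exact this.1
  obtain ⟨F, hinit, hbad⟩ := hleft (Set.range v) (by rintro _ ⟨n, rfl⟩; exact hvM n)
    (Set.infinite_range_of_injective hvmono.injective)
  apply hbad
  refine ⟨g, hgn, ?_⟩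
  intro a ha
  obtain ⟨i, rfl⟩ := hinit.1 ha
  have hcount : (F.filter (· < v i)).card = i := by
    have himg : F.filter (· < v i) = (Finset.range i).image v := by
      ext c
      simp only [Finset.mem_filter, Finset.mem_image, Finset.mem_range]
      constructor
      · rintro ⟨hcF, hci⟩
        obtain ⟨j, rfl⟩ := hinit.1 hcF
        exact ⟨j, hvmono.lt_iff_lt.mp hci, rfl⟩
      · rintro ⟨j, hji, rfl⟩
        refine ⟨?_, hvmono hji⟩
        by_contra hvjF
        have := hinit.2 (v j) ⟨j, rfl⟩ hvjF (v i) ha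
        have := hvmono hji
        omega
    rw [himg, Finset.card_image_of_injOn (fun a _ c _ h => hvmono.injective h),
      Finset.card_range]
  rw [hcount]
  have := hvmem i
  by_cases h : Even i <;> simp [h] at this ⊢ <;> exact this.2

lemma pair_dichotomy (x : ℕ → A) (c₀ : ℝ) (hb : ∀ n, ‖x n‖ ≤ c₀)
    (hA : ¬ ∃ w : ℕ → A, IsL1Sequence w) (r s : ℝ) (hrs : r < s)
    (M : Set ℕ) (hM : M.Infinite) :
    ∃ M', M' ⊆ M ∧ M'.Infinite ∧ ∀ g : A →L[ℝ] ℝ, ‖g‖ ≤ 1 →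
      ¬ ({n | n ∈ M' ∧ g (x n) < r}.Infinite ∧ {n | n ∈ M' ∧ s < g (x n)}.Infinite) := by
  obtain ⟨M₁, hM₁M, hM₁inf, hcase⟩ := nashWilliams (fun F => ¬ AltGood x r s F) M hM
  rcases hcase with hleft | hright
  · exact ⟨M₁, hM₁M, hM₁inf, fun g hg => no_osc x r s M₁ hleft g hg⟩
  · exfalso
    apply hA
    have hgood : ∀ F : Finset ℕ, ↑F ⊆ M₁ → AltGood x r s F := by
      intro F hF
      by_contra hbad
      set N : Set ℕ := ↑F ∪ {m | m ∈ M₁ ∧ ∀ a ∈ F, a < m} with hN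
      have hNM : N ⊆ M₁ := by
        rintro m (hm | hm)
        · exact hF hm
        · exact hm.1
      have hNinf : N.Infinite := by
        apply Set.Infinite.mono (s := M₁ ∩ Set.Ioi (F.sup id))
        · intro m hm
          refine Or.inr ⟨hm.1, fun a ha => ?_⟩
          have : a ≤ F.sup id := Finset.le_sup (f := id) ha
          have := hm.2
          simp only [Set.mem_Ioi] at this
          omega
        · exact inter_Ioi_infinite hM₁inf _
      refine hright N hNM hNinf ⟨F, ⟨subset_union_left, ?_⟩, hbad⟩
      rintro m (hm | hm) hmF a ha
      · exact absurd (by exact_mod_cast hm) hmF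
      · exact hm.2 a ha
    obtain ⟨u, humono, huM⟩ := exists_strictMono_into M₁ hM₁inf
    refine ⟨_, isL1_of_altGood x c₀ hb r s hrs u humono ?_⟩
    intro F hF
    apply hgood
    intro a ha
    obtain ⟨n, rfl⟩ := hF ha
    exact huM n

end Rosx
namespace Rosx
open NWx Set Filter Topology

variable {A : Type*} [NormedAddCommGroup A] [NormedSpace ℝ A]

lemma tendsto_of_no_straddle (uu : ℕ → ℝ) (c : ℝ) (hbd : ∀ n, |uu n| ≤ c)
    (h : ∀ r s1 : ℚ, (r : ℝ) < (s1 : ℝ) →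
      ¬ ({n | uu n < (r : ℝ)}.Infinite ∧ {n | (s1 : ℝ) < uu n}.Infinite)) :
    ∃ L, Tendsto uu atTop (𝓝 L) := by
  have hble : IsBoundedUnder (· ≤ ·) atTop uu :=
    isBoundedUnder_of ⟨c, fun n => (abs_le.mp (hbd n)).2⟩
  have hbge : IsBoundedUnder (· ≥ ·) atTop uu :=
    isBoundedUnder_of ⟨-c, fun n => (abs_le.mp (hbd n)).1⟩
  have heq : liminf uu atTop = limsup uu atTop := by
    rcases lt_or_ge (liminf uu atTop) (limsup uu atTop) with hlt | hle
    · exfalso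
      obtain ⟨r, hr1, hr2⟩ := exists_rat_btwn hlt
      obtain ⟨s1, hs1, hs2⟩ := exists_rat_btwn hr2
      refine h r s1 hs1 ⟨?_, ?_⟩
      · rw [← Nat.frequently_atTop_iff_infinite]
        exact frequently_lt_of_liminf_lt hble.isCoboundedUnder_ge hr1
      · rw [← Nat.frequently_atTop_iff_infinite]
        exact frequently_lt_of_lt_limsup hbge.isCoboundedUnder_le hs2
    · exact le_antisymm (liminf_le_limsup hble hbge) hle
  exact ⟨limsup uu atTop, tendsto_of_liminf_eq_limsup heq rfl hble hbge⟩

set_option maxHeartbeats 1000000 in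
lemma exists_weaklyCauchy_subseq (hA : ¬ ∃ w : ℕ → A, IsL1Sequence w)
    (x : ℕ → A) (c₀ : ℝ) (hb : ∀ n, ‖x n‖ ≤ c₀) :
    ∃ φ : ℕ → ℕ, StrictMono φ ∧ WeaklyCauchy (x ∘ φ) := by
  classical
  obtain ⟨e, hesurj⟩ : ∃ e : ℕ → ℚ × ℚ, ∀ p, ∃ n, e n = p :=
    ⟨fun n => (Denumerable.eqv (ℚ × ℚ)).symm n,
      fun p => (Denumerable.eqv (ℚ × ℚ)).symm.surjective p⟩
  -- refine sets along the enumeration of rational pairs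
  have step : ∀ (k : ℕ) (M : Set ℕ), M.Infinite → ∃ M', M' ⊆ M ∧ M'.Infinite ∧
      (((e k).1 : ℝ) < ((e k).2 : ℝ) → ∀ g : A →L[ℝ] ℝ, ‖g‖ ≤ 1 →
        ¬ ({n | n ∈ M' ∧ g (x n) < ((e k).1 : ℝ)}.Infinite ∧
           {n | n ∈ M' ∧ ((e k).2 : ℝ) < g (x n)}.Infinite)) := by
    intro k M hM
    by_cases hrs : ((e k).1 : ℝ) < ((e k).2 : ℝ)
    · obtain ⟨M', h1, h2, h3⟩ := pair_dichotomy x c₀ hb hA _ _ hrs M hM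
      exact ⟨M', h1, h2, fun _ => h3⟩
    · exact ⟨M, subset_rfl, hM, fun hc => absurd hc hrs⟩
  obtain ⟨f, hf0, hfP, hfR⟩ := chain_exists
    (fun p : ℕ × Set ℕ => p.2.Infinite)
    (fun p q => q.1 = p.1 + 1 ∧ q.2 ⊆ p.2 ∧
      (((e p.1).1 : ℝ) < ((e p.1).2 : ℝ) → ∀ g : A →L[ℝ] ℝ, ‖g‖ ≤ 1 →
        ¬ ({n | n ∈ q.2 ∧ g (x n) < ((e p.1).1 : ℝ)}.Infinite ∧
           {n | n ∈ q.2 ∧ ((e p.1).2 : ℝ) < g (x n)}.Infinite)))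
    (0, Set.univ) Set.infinite_univ
    (by
      rintro ⟨k, M⟩ hM
      obtain ⟨M', h1, h2, h3⟩ := step k M hM
      exact ⟨(k+1, M'), h2, rfl, h1, h3⟩)
  have hidx : ∀ n, (f n).1 = n := by
    intro n
    induction n with
    | zero => rw [hf0]
    | succ n ih => rw [(hfR n).1, ih]
  set Ms : ℕ → Set ℕ := fun n => (f n).2 with hMs
  have hMinf : ∀ n, (Ms n).Infinite := hfP
  have hMchain : ∀ m n, m ≤ n → Ms n ⊆ Ms m := by
    intro m n hmn
    induction n, hmn using Nat.le_induction with
    | base => exact subset_rfl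
    | succ n hmn ih => exact ((hfR n).2.1).trans ih
  have hMprop : ∀ k, ((e k).1 : ℝ) < ((e k).2 : ℝ) → ∀ g : A →L[ℝ] ℝ, ‖g‖ ≤ 1 →
      ¬ ({n | n ∈ Ms (k+1) ∧ g (x n) < ((e k).1 : ℝ)}.Infinite ∧
         {n | n ∈ Ms (k+1) ∧ ((e k).2 : ℝ) < g (x n)}.Infinite) := by
    intro k
    have := (hfR k).2.2
    rwa [hidx k] at this
  -- diagonal sequence
  obtain ⟨d, hd0, hdP, hdR⟩ := chain_exists
    (fun p : ℕ × ℕ => p.2 ∈ Ms p.1)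
    (fun p q => q.1 = p.1 + 1 ∧ p.2 < q.2)
    (0, (hMinf 0).nonempty.choose) (by
      simpa using (hMinf 0).nonempty.choose_spec)
    (by
      rintro ⟨k, val⟩ hval
      obtain ⟨w, hw⟩ := (inter_Ioi_infinite (hMinf (k+1)) val).nonempty
      exact ⟨(k+1, w), hw.1, rfl, hw.2⟩)
  have hdidx : ∀ n, (d n).1 = n := by
    intro n
    induction n with
    | zero => rw [hd0]
    | succ n ih => rw [(hdR n).1, ih]
  set φ : ℕ → ℕ := fun n => (d n).2 with hφ
  have hφmono : StrictMono φ := strictMono_nat_of_lt_succ (fun n => (hdR n).2)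
  have hφmem : ∀ n, φ n ∈ Ms n := by
    intro n
    have := hdP n
    rwa [hdidx n] at this
  refine ⟨φ, hφmono, ?_⟩
  -- weakly Cauchy
  have hball : ∀ g : A →L[ℝ] ℝ, ‖g‖ ≤ 1 →
      ∃ L, Tendsto (fun n => g ((x ∘ φ) n)) atTop (𝓝 L) := by
    intro g hg
    apply tendsto_of_no_straddle (fun j => g (x (φ j))) c₀
    · intro n
      calc |g (x (φ n))| ≤ ‖g‖ * ‖x (φ n)‖ := g.le_opNorm _
        _ ≤ 1 * c₀ := by
            apply mul_le_mul hg (hb _) (norm_nonneg _) zero_le_one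
        _ = c₀ := one_mul _
    · intro r s1 hrs1 ⟨hinf1, hinf2⟩
      obtain ⟨k, hek⟩ := hesurj (r, s1)
      apply hMprop k (by rw [hek]; exact hrs1) g hg
      rw [hek]
      constructor
      · apply Set.Infinite.mono (s := φ '' {j | k + 1 ≤ j ∧ g (x (φ j)) < (r : ℝ)})
        · rintro _ ⟨j, ⟨hj1, hj2⟩, rfl⟩
          exact ⟨hMchain (k+1) j hj1 (hφmem j), hj2⟩
        · apply Set.Infinite.image (Set.injOn_of_injective hφmono.injective)
          have : {j | k + 1 ≤ j ∧ g (x (φ j)) < (r : ℝ)} =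
              {j | g (x (φ j)) < (r : ℝ)} \ {j | j < k + 1} := by
            ext j
            simp only [Set.mem_setOf_eq, Set.mem_diff]
            exact ⟨fun hp => ⟨hp.2, by omega⟩, fun hp => ⟨by omega, hp.1⟩⟩
          rw [this]
          exact hinf1.diff (Set.finite_Iio (k+1))
      · apply Set.Infinite.mono (s := φ '' {j | k + 1 ≤ j ∧ (s1 : ℝ) < g (x (φ j))})
        · rintro _ ⟨j, ⟨hj1, hj2⟩, rfl⟩
          exact ⟨hMchain (k+1) j hj1 (hφmem j), hj2⟩
        · apply Set.Infinite.image (Set.injOn_of_injective hφmono.injective)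
          have : {j | k + 1 ≤ j ∧ (s1 : ℝ) < g (x (φ j))} =
              {j | (s1 : ℝ) < g (x (φ j))} \ {j | j < k + 1} := by
            ext j
            simp only [Set.mem_setOf_eq, Set.mem_diff]
            exact ⟨fun hp => ⟨hp.2, by omega⟩, fun hp => ⟨by omega, hp.1⟩⟩
          rw [this]
          exact hinf2.diff (Set.finite_Iio (k+1))
  intro h
  by_cases hh : h = 0
  · exact ⟨0, by simp [hh, tendsto_const_nhds]⟩
  · have hn : ‖h‖ ≠ 0 := norm_ne_zero_iff.mpr hh
    obtain ⟨L, hL⟩ := hball (‖h‖⁻¹ • h) (by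
      have := norm_smul (α := ℝ) (‖h‖⁻¹) h
      rw [this, norm_inv, norm_norm, inv_mul_cancel₀ hn])
    refine ⟨‖h‖ * L, ?_⟩
    have : (fun n => h ((x ∘ φ) n)) = fun n => ‖h‖ * ((‖h‖⁻¹ • h) ((x ∘ φ) n)) := by
      funext n
      simp only [ContinuousLinearMap.smul_apply, smul_eq_mul]
      field_simp
    rw [this]
    exact hL.const_mul _

end Rosx
namespace Rosx
open NWx Set Filter Topology

section FA
variable {A : Type*} [NormedRing A] [NormedAlgebra ℝ A]

lemma Tf_apply (f : A →L[ℝ] ℝ) (a y : A) : Tf f a y = f (a * y) := rfl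

lemma Sf_apply (f : A →L[ℝ] ℝ) (a y : A) : Sf f a y = f (y * a) := rfl

lemma Tf_sub (f : A →L[ℝ] ℝ) (a b : A) : Tf f a - Tf f b = Tf f (a - b) := by
  ext y
  simp only [ContinuousLinearMap.sub_apply, Tf_apply, sub_mul, map_sub]

lemma exists_norming (g : A →L[ℝ] ℝ) {c : ℝ} (hc : 0 ≤ c) (h : c < ‖g‖) :
    ∃ y : A, ‖y‖ ≤ 1 ∧ c < |g y| := by
  by_contra hcon
  push_neg at hcon
  have : ‖g‖ ≤ c := by
    apply ContinuousLinearMap.opNorm_le_bound g hc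
    intro z
    rcases eq_or_ne z 0 with rfl | hz
    · simp
    · have hzn : (0 : ℝ) < ‖z‖ := norm_pos_iff.mpr hz
      have h1 : ‖(‖z‖⁻¹ • z : A)‖ ≤ 1 := by
        have := norm_smul (α := ℝ) (‖z‖⁻¹) z
        rw [this, norm_inv, norm_norm, inv_mul_cancel₀ hzn.ne']
      have := hcon _ h1
      rw [map_smul] at this
      simp only [smul_eq_mul, abs_mul, abs_inv, abs_norm] at this
      rw [Real.norm_eq_abs]
      calc |g z| = ‖z‖ * (‖z‖⁻¹ * |g z|) := by field_simp
        _ ≤ ‖z‖ * c := mul_le_mul_of_nonneg_left this hzn.le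
        _ = c * ‖z‖ := mul_comm _ _
  linarith

lemma weaklyNull_comp_tendsto {x : ℕ → A} (hx : WeaklyNull x) {m : ℕ → ℕ}
    (hm : Tendsto m atTop atTop) : WeaklyNull (fun i => x (m i)) :=
  fun h => (hx h).comp hm

lemma weaklyNull_diff {y : ℕ → A} (hy : WeaklyCauchy y) {m l : ℕ → ℕ}
    (hm : ∀ i, i ≤ m i) (hl : ∀ i, i ≤ l i) :
    WeaklyNull (fun i => y (m i) - y (l i)) := by
  intro h
  obtain ⟨L, hL⟩ := hy h
  have h1 : Tendsto (fun i => h (y (m i))) atTop (𝓝 L) :=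
    hL.comp (tendsto_atTop_mono hm tendsto_id)
  have h2 : Tendsto (fun i => h (y (l i))) atTop (𝓝 L) :=
    hL.comp (tendsto_atTop_mono hl tendsto_id)
  have := h1.sub h2
  rw [sub_self] at this
  convert this using 2 with i
  rw [map_sub]

lemma weaklyPrecompact_range_of_weaklyNull {x : ℕ → A} (hx : WeaklyNull x) :
    WeaklyPrecompact (Set.range x) := by
  intro z hz
  choose m hm using hz
  by_cases hbnd : ∃ N, {i | m i = N}.Infinite
  · obtain ⟨N, hN⟩ := hbnd
    obtain ⟨φ, hφmono, hφmem⟩ := exists_strictMono_into _ hN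
    refine ⟨φ, hφmono, ?_⟩
    intro h
    refine ⟨h (x N), ?_⟩
    have : (fun n => h ((z ∘ φ) n)) = fun _ => h (x N) := by
      funext n
      have h1 := hm (φ n)
      have h2 : m (φ n) = N := hφmem n
      simp only [Function.comp_apply]
      rw [← h1, h2]
    rw [this]
    exact tendsto_const_nhds
  · push_neg at hbnd
    -- extract a subsequence along which m is strictly increasing
    obtain ⟨ψ, hψ0, hψP, hψR⟩ := chain_exists (fun _ : ℕ => True)
      (fun i i' => i < i' ∧ m i < m i') 0 trivial
      (by
        intro i _
        have hfin : {i' | m i' ≤ m i}.Finite := by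
          have : {i' | m i' ≤ m i} ⊆ ⋃ v ∈ Finset.range (m i + 1), {i' | m i' = v} := by
            intro i' hi'
            simp only [Set.mem_setOf_eq] at hi'
            simp only [Set.mem_iUnion]
            exact ⟨m i', Finset.mem_range.mpr (by omega), rfl⟩
          exact Set.Finite.subset (Set.Finite.biUnion (Finset.range (m i + 1)).finite_toSet
            (fun v _ => (hbnd v))) this
        have : ({i' | m i' ≤ m i} ∪ Set.Iic i)ᶜ.Infinite := by
          apply Set.Infinite.mono (s := (Set.univ : Set ℕ) \ ({i' | m i' ≤ m i} ∪ Set.Iic i))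
          · intro a ha; exact ha.2
          · exact Set.infinite_univ.diff (hfin.union (Set.finite_Iic i))
        obtain ⟨i', hi'⟩ := this.nonempty
        simp only [Set.mem_compl_iff, Set.mem_union, Set.mem_setOf_eq, Set.mem_Iic,
          not_or, not_le] at hi'
        exact ⟨i', trivial, hi'.2, by omega⟩)
    have hψmono : StrictMono ψ := strictMono_nat_of_lt_succ (fun n => (hψR n).1)
    have hmψ : StrictMono (fun n => m (ψ n)) := strictMono_nat_of_lt_succ (fun n => (hψR n).2)
    refine ⟨ψ, hψmono, ?_⟩
    intro h
    refine ⟨0, ?_⟩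
    have : (fun n => h ((z ∘ ψ) n)) = fun n => h (x (m (ψ n))) := by
      funext n
      simp only [Function.comp_apply]
      rw [← hm (ψ n)]
    rw [this]
    exact (hx h).comp hmψ.tendsto_atTop
end FA
end Rosx
namespace Rosx
open NWx Set Filter Topology

variable {A : Type*} [NormedRing A] [NormedAlgebra ℝ A]

lemma cc_Tf (hA : ¬ ∃ w : ℕ → A, IsL1Sequence w) (f : A →L[ℝ] ℝ)
    (hf : ∀ K : Set A, WeaklyPrecompact K → LSet (Tf f '' K)) :
    CompletelyContinuous (Tf f) := by
  intro x hx
  rw [Metric.tendsto_atTop]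
  by_contra hcon
  push_neg at hcon
  obtain ⟨ε, hε, hcon⟩ := hcon
  choose nn hnn1 hnn2 using hcon
  have hnorm : ∀ N, ε ≤ ‖Tf f (x (nn N))‖ := by
    intro N
    have := hnn2 N
    rwa [Real.dist_eq, sub_zero, abs_of_nonneg (norm_nonneg _)] at this
  have hpick : ∀ N, ∃ y : A, ‖y‖ ≤ 1 ∧ ε/2 < |Tf f (x (nn N)) y| := fun N =>
    exists_norming _ (by positivity) (lt_of_lt_of_le (half_lt_self hε) (hnorm N))
  choose y hy1 hy2 using hpick
  obtain ⟨ψ, hψmono, hψwc⟩ := exists_weaklyCauchy_subseq hA y 1 hy1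
  set Y : ℕ → A := y ∘ ψ with hYdef
  set X : ℕ → A := fun k => x (nn (ψ k)) with hXdef
  have hXw : WeaklyNull X := by
    apply weaklyNull_comp_tendsto hx
    apply tendsto_atTop_mono (fun k => le_trans hψmono.le_apply (hnn1 (ψ k))) tendsto_id
  have hK := hf (Set.range x) (weaklyPrecompact_range_of_weaklyNull hx)
  have hunif : ∃ N, ∀ j l, N ≤ j → N ≤ l → ∀ g ∈ Tf f '' (Set.range x),
      |g (Y j - Y l)| < ε/4 := by
    by_contra hc2
    push_neg at hc2
    choose jj ll hjj hll g hgmem hglb using hc2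
    have hz : WeaklyNull (fun i => Y (jj i) - Y (ll i)) := weaklyNull_diff hψwc hjj hll
    obtain ⟨N0, hN0⟩ := hK _ hz (ε/4) (by positivity)
    exact absurd (hN0 N0 le_rfl _ (hgmem N0)) (not_lt.mpr (hglb N0))
  obtain ⟨N, hN⟩ := hunif
  have h2 : Tendsto (fun k => f (X k * Y N)) atTop (𝓝 0) := hXw (Sf f (Y N))
  have h3 : ∀ᶠ k in atTop, |f (X k * Y N)| < ε/4 := by
    have := Metric.tendsto_nhds.mp h2 (ε/4) (by positivity)
    filter_upwards [this] with k hk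
    rwa [Real.dist_eq, sub_zero] at hk
  obtain ⟨K0, hK0⟩ := eventually_atTop.mp h3
  set k := max N K0 with hk
  have hk1 : ε/2 < |Tf f (X k) (Y k)| := hy2 (ψ k)
  have hdec : Tf f (X k) (Y k) = Tf f (X k) (Y k - Y N) + f (X k * Y N) := by
    simp only [Tf_apply, mul_sub, map_sub]
    ring
  have hb1 : |Tf f (X k) (Y k - Y N)| < ε/4 :=
    hN k N (le_max_left _ _) le_rfl _ ⟨X k, ⟨nn (ψ k), rfl⟩, rfl⟩
  have hb2 : |f (X k * Y N)| < ε/4 := hK0 k (le_max_right _ _)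
  have : |Tf f (X k) (Y k)| < ε/2 := by
    rw [hdec]
    calc |Tf f (X k) (Y k - Y N) + f (X k * Y N)| ≤
        |Tf f (X k) (Y k - Y N)| + |f (X k * Y N)| := abs_add_le _ _
      _ < ε/4 + ε/4 := add_lt_add hb1 hb2
      _ = ε/2 := by ring
  linarith

end Rosx

theorem tf_compact_of_no_l1 {A : Type*} [NormedRing A] [NormedAlgebra ℝ A] [CompleteSpace A]
    (hA : ¬ ∃ w : ℕ → A, IsL1Sequence w) (f : A →L[ℝ] ℝ)
    (hf : ∀ K : Set A, WeaklyPrecompact K → LSet (Tf f '' K)) :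
    IsCompactOperator (Tf f) := by
  classical
  have hcc : CompletelyContinuous (Tf f) := Rosx.cc_Tf hA f hf
  set S : Set (A →L[ℝ] ℝ) := Tf f '' Metric.closedBall 0 1 with hS
  have hone : Tendsto (fun k : ℕ => 1 / ((k : ℝ) + 1)) atTop (𝓝 0) :=
    tendsto_one_div_add_atTop_nhds_zero_nat
  have hseq : IsSeqCompact (closure S) := by
    intro u hu
    have happrox : ∀ n, ∃ v ∈ S, dist (u n) v < 1 / ((n : ℝ) + 1) := fun n =>
      Metric.mem_closure_iff.mp (hu n) _ (by positivity)
    choose v hvS hvd using happrox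
    have hex : ∀ n, ∃ b, b ∈ Metric.closedBall (0 : A) 1 ∧ Tf f b = v n := fun n => hvS n
    choose a haB hva using hex
    have hanorm : ∀ n, ‖a n‖ ≤ 1 := fun n => by
      have := haB n
      rwa [Metric.mem_closedBall, dist_zero_right] at this
    obtain ⟨φ, hφmono, hφwc⟩ := Rosx.exists_weaklyCauchy_subseq hA a 1 hanorm
    have hcauchy : CauchySeq (fun k => Tf f (a (φ k))) := by
      rw [Metric.cauchySeq_iff]
      by_contra hc
      push_neg at hc
      obtain ⟨ε, hε, hc⟩ := hc
      choose mm hmm nnn hnn hd using hc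
      have hz : WeaklyNull (fun i => a (φ (mm i)) - a (φ (nnn i))) :=
        Rosx.weaklyNull_diff hφwc hmm hnn
      have hev := Metric.tendsto_nhds.mp (hcc _ hz) ε hε
      obtain ⟨i0, hi0⟩ := Filter.eventually_atTop.mp hev
      have h1 := hi0 i0 le_rfl
      rw [Real.dist_eq, sub_zero, abs_of_nonneg (norm_nonneg _)] at h1
      have h2 := hd i0
      rw [dist_eq_norm, Rosx.Tf_sub] at h2
      linarith
    obtain ⟨g0, hg0⟩ := cauchySeq_tendsto_of_complete hcauchy
    have h1 : Tendsto (fun k => dist (u (φ k)) (Tf f (a (φ k)))) atTop (𝓝 0) := by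
      refine squeeze_zero (fun k : ℕ => dist_nonneg) (fun k => ?_) hone
      have hb := hvd (φ k)
      rw [← hva (φ k)] at hb
      have hle : 1 / ((φ k : ℝ) + 1) ≤ 1 / ((k : ℝ) + 1) := by
        apply one_div_le_one_div_of_le (by positivity)
        have : (k : ℝ) ≤ (φ k : ℝ) := by exact_mod_cast hφmono.le_apply
        linarith
      exact le_trans hb.le hle
    have h2 : Tendsto (fun k => dist (Tf f (a (φ k))) g0) atTop (𝓝 0) :=
      tendsto_iff_dist_tendsto_zero.mp hg0
    have huφ : Tendsto (u ∘ φ) atTop (𝓝 g0) := by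
      rw [tendsto_iff_dist_tendsto_zero]
      refine squeeze_zero (fun k : ℕ => dist_nonneg)
        (fun k => dist_triangle (u (φ k)) (Tf f (a (φ k))) g0) ?_
      simpa using h1.add h2
    have hg0mem : g0 ∈ closure S := by
      apply mem_closure_of_tendsto hg0
      apply Filter.Eventually.of_forall
      intro k
      exact ⟨a (φ k), haB (φ k), rfl⟩
    exact ⟨g0, hg0mem, φ, hφmono, huφ⟩
  refine ⟨closure S, hseq.isCompact, ?_⟩
  apply Filter.mem_of_superset (Metric.closedBall_mem_nhds (0 : A) one_pos)
  intro z hz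
  exact subset_closure ⟨z, hz, rfl⟩
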